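/- For the platoon characteristic polynomial φ(s) = s^4 + ((1 + n*κa)/ς) s^3 + (n*κv/ς) s^2 + (n*κp/ς) s + (n*κs/ς) with ς > 0 and n > 0, all roots have negative real part if and only if κs > 0, κp > 0, κa > -1/n, κp < κv(1 + n κa)/ς, and κv > (κs (1 + n κa)^2 + ς n κp^2) / (n (1 + n κa) κp). -/

import Mathlib

/-- Every depressed real quartic `y^4 + P y^2 + Q y + R` factors into two real
monic quadratics `(y^2+u y+v)(y^2-u y+w)`. -/
lemma depressed_factor (P Q R : ℝ) :
    ∃ u v w : ℝ, v + w - u ^ 2 = P ∧ u * (w - v) = Q ∧ v * w = R := by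
  by_cases hQ : Q = 0
  · by_cases hD : P ^ 2 - 4 * R ≥ 0
    · refine ⟨0, (P - Real.sqrt (P ^ 2 - 4 * R)) / 2, (P + Real.sqrt (P ^ 2 - 4 * R)) / 2, ?_, ?_, ?_⟩
      · ring
      · simp [hQ]
      · have hs : Real.sqrt (P ^ 2 - 4 * R) ^ 2 = P ^ 2 - 4 * R := Real.sq_sqrt hD
        nlinarith [hs]
    · push_neg at hD
      have hR : 0 < R := by nlinarith [sq_nonneg P]
      have he : Real.sqrt R ^ 2 = R := Real.sq_sqrt hR.le
      have he0 : 0 < Real.sqrt R := Real.sqrt_pos.mpr hR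
      have hu : 0 ≤ 2 * Real.sqrt R - P := by nlinarith [abs_nonneg P, sq_abs P, le_abs_self P]
      refine ⟨Real.sqrt (2 * Real.sqrt R - P), Real.sqrt R, Real.sqrt R, ?_, ?_, ?_⟩
      · have := Real.sq_sqrt hu
        linarith
      · simp [hQ]
      · nlinarith [he]
  · -- use IVT on the resolvent cubic h(U) = U^3 + 2P U^2 + (P^2-4R) U - Q^2
    set h : ℝ → ℝ := fun U => U ^ 3 + 2 * P * U ^ 2 + (P ^ 2 - 4 * R) * U - Q ^ 2 with hh
    set M : ℝ := 1 + 2 * |P| + |P ^ 2 - 4 * R| + Q ^ 2 with hM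
    have hM1 : 1 ≤ M := by rw [hM]; nlinarith [abs_nonneg P, abs_nonneg (P ^ 2 - 4 * R), sq_nonneg Q]
    have hM0 : (0:ℝ) ≤ M := by linarith
    have hcont : ContinuousOn h (Set.Icc 0 M) := by fun_prop
    have hh0 : h 0 ≤ 0 := by simp [hh]; nlinarith [sq_nonneg Q]
    have hhM : 0 ≤ h M := by
      have h1 : |P| ≤ M := by nlinarith [sq_nonneg Q, abs_nonneg (P^2-4*R)]
      have h2 : M ^ 2 ≥ M := by nlinarith
      have h3 : -|P| ≤ P := neg_abs_le P
      have h4 : -|P ^ 2 - 4 * R| ≤ P ^ 2 - 4 * R := neg_abs_le _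
      have : h M ≥ M ^ 3 - 2 * |P| * M ^ 2 - |P ^ 2 - 4 * R| * M - Q ^ 2 := by
        simp only [hh]
        nlinarith [abs_nonneg P, abs_nonneg (P ^ 2 - 4 * R), sq_nonneg M]
      nlinarith [abs_nonneg P, abs_nonneg (P ^ 2 - 4 * R), sq_nonneg Q]
    obtain ⟨U, hUmem, hU⟩ := intermediate_value_Icc hM0 hcont ⟨hh0, hhM⟩
    have hU0 : 0 < U := by
      rcases lt_or_eq_of_le hUmem.1 with h' | h'
      · exact h'
      · exfalso; rw [← h'] at hU; simp [hh] at hU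
        exact hQ (by nlinarith [sq_nonneg Q, hU])
    have hu2 : Real.sqrt U ^ 2 = U := Real.sq_sqrt hU0.le
    have hupos : 0 < Real.sqrt U := Real.sqrt_pos.mpr hU0
    have hune : Real.sqrt U ≠ 0 := ne_of_gt hupos
    refine ⟨Real.sqrt U, ((P + U) - Q / Real.sqrt U) / 2, ((P + U) + Q / Real.sqrt U) / 2, ?_, ?_, ?_⟩
    · rw [hu2]; ring
    · field_simp
      ring
    · have hUeq : U ^ 3 + 2 * P * U ^ 2 + (P ^ 2 - 4 * R) * U - Q ^ 2 = 0 := hU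
      have : (((P + U) - Q / Real.sqrt U) / 2) * (((P + U) + Q / Real.sqrt U) / 2)
          = ((P + U) ^ 2 - Q ^ 2 / U) / 4 := by
        rw [div_mul_div_comm]
        rw [show ((P + U) - Q / Real.sqrt U) * ((P + U) + Q / Real.sqrt U)
            = (P + U) ^ 2 - (Q / Real.sqrt U) ^ 2 by ring]
        rw [div_pow, hu2]; norm_num
      rw [this]
      field_simp
      nlinarith [hUeq]

/-- Every monic real quartic factors into two monic real quadratics (coefficient form). -/
lemma quartic_factor (a b c d : ℝ) :
    ∃ p q r t : ℝ, p + r = a ∧ q + t + p * r = b ∧ p * t + q * r = c ∧ q * t = d := by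
  obtain ⟨u, v, w, h1, h2, h3⟩ := depressed_factor (b - 3 * a ^ 2 / 8)
    (c - a * b / 2 + a ^ 3 / 8) (d - a * c / 4 + a ^ 2 * b / 16 - 3 * a ^ 4 / 256)
  refine ⟨a / 2 + u, a ^ 2 / 16 + u * a / 4 + v, a / 2 - u, a ^ 2 / 16 - u * a / 4 + w,
    by ring, by linear_combination h1, by linear_combination (a / 2) * h1 + h2,
    by linear_combination (a ^ 2 / 16) * h1 + (a / 4) * h2 + h3⟩

/-- Roots of a real quadratic with positive coefficients lie in the open left half plane. -/
lemma quad_root_neg {p q : ℝ} (hp : 0 < p) (hq : 0 < q) {z : ℂ}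
    (h : z ^ 2 + (p : ℂ) * z + (q : ℂ) = 0) : z.re < 0 := by
  have hre : z.re ^ 2 - z.im ^ 2 + p * z.re + q = 0 := by
    have := congrArg Complex.re h
    simpa [Complex.add_re, Complex.mul_re, pow_two, Complex.mul_im] using this
  have him : 2 * z.re * z.im + p * z.im = 0 := by
    have := congrArg Complex.im h
    simp [Complex.add_im, Complex.mul_re, pow_two, Complex.mul_im] at this
    linarith
  by_cases hy : z.im = 0
  · rw [hy] at hre
    by_contra hx
    push_neg at hx
    nlinarith
  · have : z.im * (2 * z.re + p) = 0 := by linarith [him]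
    have h2 : 2 * z.re + p = 0 := by
      rcases mul_eq_zero.mp this with h' | h'
      · exact absurd h' hy
      · exact h'
    linarith

/-- If all roots of a real monic quadratic lie in the open left half plane, its
coefficients are positive. -/
lemma quad_coeff_pos {p q : ℝ}
    (h : ∀ z : ℂ, z ^ 2 + (p : ℂ) * z + (q : ℂ) = 0 → z.re < 0) : 0 < p ∧ 0 < q := by
  by_cases hD : p ^ 2 - 4 * q ≥ 0
  · set D := Real.sqrt (p ^ 2 - 4 * q) with hDdef
    have hD2 : D ^ 2 = p ^ 2 - 4 * q := Real.sq_sqrt hD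
    have h1 : (((-p + D) / 2 : ℝ) : ℂ) ^ 2 + (p : ℂ) * (((-p + D) / 2 : ℝ) : ℂ) + (q : ℂ) = 0 := by
      push_cast
      have : ((-p + D) / 2 : ℝ) ^ 2 + p * ((-p + D) / 2) + q = 0 := by nlinarith [hD2]
      have h' := congrArg (fun x : ℝ => (x : ℂ)) this
      simp only [Complex.ofReal_add, Complex.ofReal_sub, Complex.ofReal_neg, Complex.ofReal_mul,
        Complex.ofReal_pow, Complex.ofReal_div, Complex.ofReal_ofNat, Complex.ofReal_zero] at h' ⊢
      linear_combination h'
    have h2 : (((-p - D) / 2 : ℝ) : ℂ) ^ 2 + (p : ℂ) * (((-p - D) / 2 : ℝ) : ℂ) + (q : ℂ) = 0 := by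
      push_cast
      have : ((-p - D) / 2 : ℝ) ^ 2 + p * ((-p - D) / 2) + q = 0 := by nlinarith [hD2]
      have h' := congrArg (fun x : ℝ => (x : ℂ)) this
      simp only [Complex.ofReal_add, Complex.ofReal_sub, Complex.ofReal_neg, Complex.ofReal_mul,
        Complex.ofReal_pow, Complex.ofReal_div, Complex.ofReal_ofNat, Complex.ofReal_zero] at h' ⊢
      linear_combination h'
    have hx1 := h _ h1
    have hx2 := h _ h2
    rw [Complex.ofReal_re] at hx1 hx2
    constructor
    · linarith
    · nlinarith [hD2]
  · push_neg at hD
    set B := Real.sqrt (4 * q - p ^ 2) with hBdef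
    have hB2 : B ^ 2 = 4 * q - p ^ 2 := Real.sq_sqrt (by linarith)
    set z : ℂ := Complex.mk (-p / 2) (B / 2) with hz
    have hroot : z ^ 2 + (p : ℂ) * z + (q : ℂ) = 0 := by
      apply Complex.ext
      · simp [hz, pow_two, Complex.mul_re, Complex.mul_im, Complex.add_re]
        nlinarith [hB2]
      · simp [hz, pow_two, Complex.mul_re, Complex.mul_im, Complex.add_im]
        ring
    have := h z hroot
    have hzre : z.re = -p / 2 := rfl
    rw [hzre] at this
    constructor
    · linarith
    · nlinarith

/-- Routh–Hurwitz criterion for monic real quartics. -/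
lemma quartic_hurwitz (a b c d : ℝ) :
    (∀ z : ℂ, z ^ 4 + (a : ℂ) * z ^ 3 + (b : ℂ) * z ^ 2 + (c : ℂ) * z + (d : ℂ) = 0 →
      z.re < 0) ↔ (0 < a ∧ 0 < c ∧ 0 < d ∧ a ^ 2 * d + c ^ 2 < a * b * c) := by
  obtain ⟨p, q, r, t, h1, h2, h3, h4⟩ := quartic_factor a b c d
  have hfac : ∀ z : ℂ, z ^ 4 + (a : ℂ) * z ^ 3 + (b : ℂ) * z ^ 2 + (c : ℂ) * z + (d : ℂ)
      = (z ^ 2 + (p : ℂ) * z + (q : ℂ)) * (z ^ 2 + (r : ℂ) * z + (t : ℂ)) := by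
    intro z
    have e1 : (a : ℂ) = (p : ℂ) + (r : ℂ) := by
      exact_mod_cast congrArg (fun x : ℝ => (x : ℂ)) h1.symm
    have e2 : (b : ℂ) = (q : ℂ) + (t : ℂ) + (p : ℂ) * (r : ℂ) := by
      exact_mod_cast congrArg (fun x : ℝ => (x : ℂ)) h2.symm
    have e3 : (c : ℂ) = (p : ℂ) * (t : ℂ) + (q : ℂ) * (r : ℂ) := by
      exact_mod_cast congrArg (fun x : ℝ => (x : ℂ)) h3.symm
    have e4 : (d : ℂ) = (q : ℂ) * (t : ℂ) := by
      exact_mod_cast congrArg (fun x : ℝ => (x : ℂ)) h4.symm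
    rw [e1, e2, e3, e4]; ring
  have hE : a * b * c - c ^ 2 - a ^ 2 * d
      = p * r * ((q - t) ^ 2 + (p + r) * (p * t + q * r)) := by
    rw [← h1, ← h2, ← h3, ← h4]; ring
  constructor
  · intro hstab
    have hpq : 0 < p ∧ 0 < q := by
      apply quad_coeff_pos
      intro z hzr
      exact hstab z (by rw [hfac z, hzr, zero_mul])
    have hrt : 0 < r ∧ 0 < t := by
      apply quad_coeff_pos
      intro z hzr
      exact hstab z (by rw [hfac z, hzr, mul_zero])
    obtain ⟨hp, hq⟩ := hpq; obtain ⟨hr, ht⟩ := hrt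
    refine ⟨by rw [← h1]; positivity, by rw [← h3]; positivity, by rw [← h4]; positivity, ?_⟩
    nlinarith [hE, sq_nonneg (q - t), mul_pos hp hr, mul_pos (mul_pos hp hr)
      (mul_pos (add_pos hp hr) (add_pos (mul_pos hp ht) (mul_pos hq hr)))]
  · rintro ⟨ha, hc, hd, hΔ⟩
    -- show p, q, r, t are all positive
    have hqt : 0 < q ∧ 0 < t := by
      rcases lt_trichotomy q 0 with hq | hq | hq
      · -- q < 0, hence t < 0 (qt = d > 0), derive contradiction from b, a, c
        have ht : t < 0 := by nlinarith
        have hb : 0 < b := by nlinarith [mul_pos ha hc, mul_pos (mul_pos ha ha) hd, sq_nonneg c]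
        have hpr : 0 < p * r := by nlinarith
        have hp : 0 < p := by
          rcases lt_trichotomy p 0 with h' | h' | h'
          · nlinarith
          · nlinarith
          · exact h'
        have hr : 0 < r := by nlinarith
        nlinarith
      · exfalso; rw [hq] at h4; simp at h4; nlinarith
      · refine ⟨hq, ?_⟩; nlinarith
    obtain ⟨hq, ht⟩ := hqt
    have hpr : 0 < p * r := by
      have hsum : 0 < (q - t) ^ 2 + (p + r) * (p * t + q * r) := by
        rw [h1, h3]; nlinarith
      nlinarith [hE, hsum]
    have hp : 0 < p := by
      rcases lt_trichotomy p 0 with h' | h' | h'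
      · nlinarith
      · nlinarith
      · exact h'
    have hr : 0 < r := by nlinarith
    intro z hz
    rw [hfac z] at hz
    rcases mul_eq_zero.mp hz with h' | h'
    · exact quad_root_neg hp hq h'
    · exact quad_root_neg hr ht h'

private lemma pos_mul_right_iff {x c : ℝ} (hc : 0 < c) : 0 < x * c ↔ 0 < x := by
  constructor
  · intro h
    by_contra hx
    push_neg at hx
    nlinarith
  · intro h
    exact mul_pos h hc

/-- Stability of the platoon quartic characteristic polynomial
`φ(s) = s^4 + ((1+n κa)/ς) s^3 + (n κv/ς) s^2 + (n κp/ς) s + n κs/ς`. -/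
theorem platoon_quartic_stability (ς n κs κp κv κa : ℝ) (hς : ς > 0) (hn : n > 0) :
    (∀ z : ℂ, z ^ 4 + (((1 + n * κa) / ς : ℝ) : ℂ) * z ^ 3 + ((n * κv / ς : ℝ) : ℂ) * z ^ 2 +
        ((n * κp / ς : ℝ) : ℂ) * z + ((n * κs / ς : ℝ) : ℂ) = 0 → z.re < 0) ↔
    (κs > 0 ∧ κp > 0 ∧ κa > -1 / n ∧ κp < κv * (1 + n * κa) / ς ∧
      κv > (κs * (1 + n * κa) ^ 2 + ς * n * κp ^ 2) / (n * (1 + n * κa) * κp)) := by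
  rw [quartic_hurwitz ((1 + n * κa) / ς) (n * κv / ς) (n * κp / ς) (n * κs / ς)]
  set e := 1 + n * κa with he
  have E1 : 0 < e / ς ↔ 0 < e := by
    constructor
    · intro h
      have := mul_pos h hς
      rwa [div_mul_cancel₀ e hς.ne'] at this
    · intro h
      exact div_pos h hς
  have E2 : 0 < n * κp / ς ↔ 0 < κp := by
    rw [div_pos_iff_of_pos_right hς, mul_pos_iff_of_pos_left hn]
  have E3 : 0 < n * κs / ς ↔ 0 < κs := by
    rw [div_pos_iff_of_pos_right hς, mul_pos_iff_of_pos_left hn]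
  have Ea : 0 < e ↔ κa > -1 / n := by
    rw [he, gt_iff_lt, div_lt_iff₀ hn]
    constructor <;> intro h <;> nlinarith
  constructor
  · rintro ⟨ha, hc, hd, hΔ⟩
    have hepos : 0 < e := E1.mp ha
    have hκp : 0 < κp := E2.mp hc
    have hκs : 0 < κs := E3.mp hd
    -- clear denominators in hΔ
    have hid : (e / ς) * (n * κv / ς) * (n * κp / ς) -
        ((e / ς) ^ 2 * (n * κs / ς) + (n * κp / ς) ^ 2) =
        (n * e * κv * κp - κs * e ^ 2 - ς * n * κp ^ 2) * (n / ς ^ 3) := by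
      field_simp
      ring
    have hstar : κs * e ^ 2 + ς * n * κp ^ 2 < n * e * κv * κp := by
      have h1 : 0 < (n * e * κv * κp - κs * e ^ 2 - ς * n * κp ^ 2) * (n / ς ^ 3) := by
        rw [← hid]; linarith
      have := (pos_mul_right_iff (by positivity : (0:ℝ) < n / ς ^ 3)).mp h1
      linarith
    refine ⟨hκs, hκp, Ea.mp hepos, ?_, ?_⟩
    · rw [lt_div_iff₀ hς]
      nlinarith [mul_pos hn hκp, mul_pos hepos hepos]
    · rw [gt_iff_lt, div_lt_iff₀ (by positivity : 0 < n * e * κp)]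
      nlinarith
  · rintro ⟨hκs, hκp, hκa, h4, h5⟩
    have hepos : 0 < e := Ea.mpr hκa
    have hstar : κs * e ^ 2 + ς * n * κp ^ 2 < n * e * κv * κp := by
      rw [gt_iff_lt, div_lt_iff₀ (by positivity : 0 < n * e * κp)] at h5
      nlinarith
    refine ⟨E1.mpr hepos, E2.mpr hκp, E3.mpr hκs, ?_⟩
    have hid : (e / ς) * (n * κv / ς) * (n * κp / ς) -
        ((e / ς) ^ 2 * (n * κs / ς) + (n * κp / ς) ^ 2) =
        (n * e * κv * κp - κs * e ^ 2 - ς * n * κp ^ 2) * (n / ς ^ 3) := by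
      field_simp
      ring
    have h1 : 0 < (n * e * κv * κp - κs * e ^ 2 - ς * n * κp ^ 2) * (n / ς ^ 3) :=
      mul_pos (by linarith) (by positivity)
    rw [← hid] at h1
    linarith
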